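/- Let A be a Hermitian n×n complex matrix with maximal spectral multiplicity m, and for each eigenvalue λ let P_λ be the orthogonal projection onto ker(A − λI). Let e₁, …, e_m ∈ ℂⁿ be orthonormal vectors that are pairwise spectrally orthogonal with respect to A, i.e. ⟪P_λ e_j, e_i⟫ = 0 for all i ≠ j and every eigenvalue λ. Then the chain span{e₁} ⊂ span{e₁,e₂} ⊂ … ⊂ span{e₁,…,e_m} is a Hellinger chain — that is, for every k ≤ m and every eigenvalue λ, rank((⟪P_λ e_j, e_i⟫)_{1 ≤ i,j ≤ k}) = min(k, dim ker(A − λI)) — if and only if for every i ≤ m and every eigenvalue λ: P_λ e_i ≠ 0 exactly when dim ker(A − λI) ≥ i. -/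

import Mathlib

open MeasureTheory Module
open scoped ComplexInnerProductSpace

section Helpers

variable {E : Type*} [NormedAddCommGroup E] [InnerProductSpace ℂ E]

private lemma inner_proj_self' (K : Submodule ℂ E) [K.HasOrthogonalProjection] (v : E) :
    ⟪(Submodule.orthogonalProjectionOnto K v : E), v⟫ =
      ⟪(Submodule.orthogonalProjectionOnto K v : E), (Submodule.orthogonalProjectionOnto K v : E)⟫ := by
  have h := K.starProjection_inner_eq_zero v (Submodule.orthogonalProjectionOnto K v)
    (Submodule.orthogonalProjectionOnto K v).2
  have h1 : ⟪v - (Submodule.orthogonalProjectionOnto K v : E), (Submodule.orthogonalProjectionOnto K v : E)⟫ = 0 := h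
  rw [inner_sub_left, sub_eq_zero] at h1
  have h2 : ⟪(Submodule.orthogonalProjectionOnto K v : E), v⟫ =
      starRingEnd ℂ ⟪v, (Submodule.orthogonalProjectionOnto K v : E)⟫ := (inner_conj_symm _ _).symm
  rw [h2, h1, inner_self_conj]

private lemma inner_proj_ne_zero' (K : Submodule ℂ E) [K.HasOrthogonalProjection] (v : E) :
    ⟪(Submodule.orthogonalProjectionOnto K v : E), v⟫ ≠ 0 ↔ Submodule.orthogonalProjectionOnto K v ≠ 0 := by
  rw [inner_proj_self']
  rw [inner_self_ne_zero]
  exact ⟨fun h h0 => h (by rw [h0]; rfl), fun h h0 => h (Subtype.coe_injective h0)⟩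

private lemma rank_inner_matrix' {k : ℕ} (K : Submodule ℂ E) [K.HasOrthogonalProjection]
    (v : Fin k → E)
    (horth : ∀ i j, i ≠ j → ⟪(Submodule.orthogonalProjectionOnto K (v j) : E), v i⟫ = 0) :
    (Matrix.of fun i j : Fin k => ⟪(Submodule.orthogonalProjectionOnto K (v j) : E), v i⟫).rank
      = Nat.card {i : Fin k // Submodule.orthogonalProjectionOnto K (v i) ≠ 0} := by
  classical
  have hdiag : (Matrix.of fun i j : Fin k => ⟪(Submodule.orthogonalProjectionOnto K (v j) : E), v i⟫)
      = Matrix.diagonal (fun i => ⟪(Submodule.orthogonalProjectionOnto K (v i) : E), v i⟫) := by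
    ext i j
    by_cases h : i = j
    · subst h; simp [Matrix.diagonal]
    · simp [Matrix.diagonal, h]; exact horth i j (fun hh => h hh)
  rw [hdiag, Matrix.rank_diagonal, ← Nat.card_eq_fintype_card]
  exact Nat.card_congr (Equiv.subtypeEquivRight fun i => inner_proj_ne_zero' K (v i))

private lemma card_fin_lt' (k d : ℕ) : Nat.card {i : Fin k // (i : ℕ) < d} = min k d := by
  have e : {i : Fin k // (i : ℕ) < d} ≃ Fin (min k d) :=
    { toFun := fun i => ⟨i.1, lt_min i.1.2 i.2⟩
      invFun := fun j => ⟨⟨j, lt_of_lt_of_le j.2 (min_le_left _ _)⟩,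
        lt_of_lt_of_le j.2 (min_le_right _ _)⟩
      left_inv := fun i => by ext; rfl
      right_inv := fun j => rfl }
  rw [Nat.card_congr e]; simp

private lemma all_of_card' {α : Type*} [Fintype α] (p : α → Prop)
    (h : Nat.card {x // p x} = Fintype.card α) : ∀ x, p x := by
  classical
  rw [Nat.card_eq_fintype_card, Fintype.card_subtype, ← Finset.card_univ] at h
  intro x
  exact Finset.card_filter_eq_iff.mp h x (Finset.mem_univ x)

end Helpers

/-- The self-adjoint endomorphism of `ℂⁿ` (with the Euclidean inner product)
associated with a matrix `A`. -/
noncomputable def matEnd (n : ℕ) (A : Matrix (Fin n) (Fin n) ℂ) :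
    Module.End ℂ (EuclideanSpace ℂ (Fin n)) :=
  Matrix.toEuclideanLin A

/-- **The remark of Section 5 on spectrally orthogonal vectors.**
Let `A` be a Hermitian `n × n` matrix with maximal spectral multiplicity `m`, and
let `e₁, …, e_m` be orthonormal vectors that are pairwise spectrally orthogonal
(`⟪Pₗ eⱼ, eᵢ⟫ = 0` for `i ≠ j` and every eigenvalue `λ`, `Pₗ` the orthogonal
projection onto `ker (A - λ)`).  Then `span{e₁} ⊂ … ⊂ span{e₁,…,e_m}` is a
Hellinger chain, i.e. `rank (⟪Pₗ eⱼ, eᵢ⟫)_{i,j ≤ k} = min k (dim ker (A - λ))`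
for all `1 ≤ k ≤ m` and eigenvalues `λ`, if and only if for every `i ≤ m` and
every eigenvalue `λ`: `Pₗ eᵢ ≠ 0` exactly when `dim ker (A - λ) ≥ i`. -/
theorem stmt_11 (n m : ℕ) (A : Matrix (Fin n) (Fin n) ℂ) (hA : A.IsHermitian)
    (hm : IsGreatest {d : ℕ | ∃ μ : ℂ, (matEnd n A).HasEigenvalue μ ∧
      d = Module.finrank ℂ ((matEnd n A).eigenspace μ)} m)
    (e : Fin m → EuclideanSpace ℂ (Fin n)) (he : Orthonormal ℂ e)
    (horth : ∀ i j : Fin m, i ≠ j → ∀ μ : ℂ, (matEnd n A).HasEigenvalue μ →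
      ⟪(Submodule.orthogonalProjectionOnto ((matEnd n A).eigenspace μ) (e j) :
          EuclideanSpace ℂ (Fin n)), e i⟫ = 0) :
    (∀ (k : ℕ) (hk : k ≤ m), 1 ≤ k → ∀ μ : ℂ, (matEnd n A).HasEigenvalue μ →
        (Matrix.of fun i j : Fin k =>
            ⟪(Submodule.orthogonalProjectionOnto ((matEnd n A).eigenspace μ)
                (e (Fin.castLE hk j)) : EuclideanSpace ℂ (Fin n)),
              e (Fin.castLE hk i)⟫).rank
          = min k (Module.finrank ℂ ((matEnd n A).eigenspace μ))) ↔
    (∀ i : Fin m, ∀ μ : ℂ, (matEnd n A).HasEigenvalue μ →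
        (Submodule.orthogonalProjectionOnto ((matEnd n A).eigenspace μ) (e i) ≠ 0 ↔
          (i : ℕ) + 1 ≤ Module.finrank ℂ ((matEnd n A).eigenspace μ))) := by
  classical
  set T := matEnd n A with hT
  -- basic facts about multiplicities
  have hd1 : ∀ μ : ℂ, T.HasEigenvalue μ → 1 ≤ finrank ℂ (T.eigenspace μ) := by
    intro μ hμ
    have : Nontrivial (T.eigenspace μ) := Submodule.nontrivial_iff_ne_bot.mpr hμ
    exact Module.finrank_pos
  have hdm : ∀ μ : ℂ, T.HasEigenvalue μ → finrank ℂ (T.eigenspace μ) ≤ m := by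
    intro μ hμ; exact hm.2 ⟨μ, hμ, rfl⟩
  have hm1 : 1 ≤ m := by
    obtain ⟨μ₀, hμ₀, hd⟩ := hm.1
    rw [hd]; exact hd1 μ₀ hμ₀
  -- rewrite the rank as a count of nonzero projections
  have hrank : ∀ (k : ℕ) (hk : k ≤ m) (μ : ℂ), T.HasEigenvalue μ →
      (Matrix.of fun i j : Fin k =>
          ⟪(Submodule.orthogonalProjectionOnto (T.eigenspace μ) (e (Fin.castLE hk j)) :
              EuclideanSpace ℂ (Fin n)), e (Fin.castLE hk i)⟫).rank
        = Nat.card {i : Fin k //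
            Submodule.orthogonalProjectionOnto (T.eigenspace μ) (e (Fin.castLE hk i)) ≠ 0} := by
    intro k hk μ hμ
    exact rank_inner_matrix' (T.eigenspace μ) (fun i => e (Fin.castLE hk i))
      (fun i j hij => horth _ _ (fun h => hij (Fin.ext (by
        simpa using congrArg Fin.val h))) μ hμ)
  constructor
  · -- forward direction
    intro H i μ hμ
    set d := finrank ℂ (T.eigenspace μ) with hdd
    have hdm' : d ≤ m := hdm μ hμ
    have hd1' : 1 ≤ d := hd1 μ hμ
    -- from k = d : the first d projections are nonzero
    have hfirst : ∀ j : Fin d, Submodule.orthogonalProjectionOnto (T.eigenspace μ) (e (Fin.castLE hdm' j)) ≠ 0 := by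
      have h1 := H d hdm' hd1' μ hμ
      rw [hrank d hdm' μ hμ] at h1
      refine all_of_card' _ ?_
      rw [h1, min_self, Fintype.card_fin]
    -- from k = m : exactly d projections are nonzero
    have hcount : Nat.card {j : Fin m // Submodule.orthogonalProjectionOnto (T.eigenspace μ) (e j) ≠ 0} = d := by
      have h2 := H m le_rfl hm1 μ hμ
      rw [hrank m le_rfl μ hμ] at h2
      have hc : ∀ j : Fin m, Fin.castLE (le_refl m) j = j := fun j => rfl
      simp only [hc] at h2
      rw [h2, min_eq_right hdm']
    constructor
    · intro hne
      by_contra hlt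
      push_neg at hlt
      have hid : d ≤ (i : ℕ) := Nat.lt_succ_iff.mp hlt
      -- build d+1 distinct indices with nonzero projection
      have hS : (Finset.univ.filter
          (fun j : Fin m => Submodule.orthogonalProjectionOnto (T.eigenspace μ) (e j) ≠ 0)).card = d := by
        rw [← hcount, Nat.card_eq_fintype_card, Fintype.card_subtype]
      set S := Finset.univ.filter
          (fun j : Fin m => Submodule.orthogonalProjectionOnto (T.eigenspace μ) (e j) ≠ 0) with hSdef
      set Tset := (Finset.univ : Finset (Fin d)).image (Fin.castLE hdm') with hTdef
      have hTS : Tset ⊆ S := by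
        intro x hx
        rw [hTdef, Finset.mem_image] at hx
        obtain ⟨j, _, rfl⟩ := hx
        rw [hSdef, Finset.mem_filter]
        exact ⟨Finset.mem_univ _, hfirst j⟩
      have hiS : i ∈ S := by
        rw [hSdef, Finset.mem_filter]; exact ⟨Finset.mem_univ _, hne⟩
      have hiT : i ∉ Tset := by
        intro hx
        rw [hTdef, Finset.mem_image] at hx
        obtain ⟨j, _, hji⟩ := hx
        have hj2 : (j : ℕ) < d := j.2
        have hv := congrArg Fin.val hji
        simp only [Fin.coe_castLE] at hv
        omega
      have hinj : Function.Injective (Fin.castLE hdm') := fun a b hab =>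
        Fin.ext (by simpa using congrArg Fin.val hab)
      have hcard : Tset.card = d := by
        rw [hTdef, Finset.card_image_of_injective _ hinj, Finset.card_univ, Fintype.card_fin]
      have : d + 1 ≤ S.card := by
        have h3 : insert i Tset ⊆ S := Finset.insert_subset hiS hTS
        have h4 : (insert i Tset).card = d + 1 := by
          rw [Finset.card_insert_of_notMem hiT, hcard]
        rw [← h4]; exact Finset.card_le_card h3
      omega
    · intro hle
      have hlt : (i : ℕ) < d := hle
      have := hfirst ⟨(i : ℕ), hlt⟩
      have hc : Fin.castLE hdm' ⟨(i : ℕ), hlt⟩ = i := Fin.ext rfl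
      rwa [hc] at this
  · -- backward direction
    intro H k hk hk1 μ hμ
    rw [hrank k hk μ hμ]
    set d := finrank ℂ (T.eigenspace μ) with hdd
    have heq : ∀ i : Fin k,
        (Submodule.orthogonalProjectionOnto (T.eigenspace μ) (e (Fin.castLE hk i)) ≠ 0) ↔ (i : ℕ) < d := by
      intro i
      rw [H (Fin.castLE hk i) μ hμ]
      exact Iff.rfl
    rw [Nat.card_congr (Equiv.subtypeEquivRight heq), card_fin_lt']
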